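/- Let K ⊂ ℝⁿ be a compact convex set with nonempty interior. Then there exist a constant c_K > 0 and r_K > 0 such that for every boundary point y ∈ ∂K and every 0 < r < r_K, the (n−1)-dimensional Hausdorff measure of ∂B_r(y) ∩ K is at least c_K·r^{n−1}. -/

import Mathlib

open MeasureTheory

open Metric Module Set in
/-- Lower bound for the Hausdorff measure of a closed ball in `EuclideanSpace ℝ (Fin m)`. -/
lemma aux_hausdorff_ball (m : ℕ) : ∃ c > (0:ℝ), ∀ R : ℝ, 0 ≤ R →
    ENNReal.ofReal (c * R ^ m) ≤
      μH[(m : ℝ)] (Metric.closedBall (0 : EuclideanSpace ℝ (Fin m)) R) := by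
  have hfr : finrank ℝ (EuclideanSpace ℝ (Fin m)) = m := finrank_euclideanSpace_fin
  have hHaar : (μH[(m : ℝ)] :
      Measure (EuclideanSpace ℝ (Fin m))).IsAddHaarMeasure := by
    have := isAddHaarMeasure_hausdorffMeasure (E := EuclideanSpace ℝ (Fin m))
    rwa [hfr] at this
  set μ : Measure (EuclideanSpace ℝ (Fin m)) := μH[(m : ℝ)] with hμ
  have hfin : μ (Metric.ball 0 1) < ⊤ := measure_ball_lt_top
  have hpos : 0 < μ (Metric.ball 0 1) := measure_ball_pos μ 0 one_pos
  refine ⟨(μ (Metric.ball 0 1)).toReal,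
    ENNReal.toReal_pos hpos.ne' hfin.ne, fun R hR => ?_⟩
  have := Measure.addHaar_closedBall (μ := μ) (0 : EuclideanSpace ℝ (Fin m)) hR
  rw [hfr] at this
  rw [this, mul_comm, ENNReal.ofReal_mul (by positivity)]
  gcongr
  exact ENNReal.ofReal_toReal_le

set_option maxHeartbeats 1000000 in
theorem stmt13 (n : ℕ) (hn : 1 ≤ n) (K : Set (EuclideanSpace ℝ (Fin n)))
    (hK : IsCompact K) (hconv : Convex ℝ K) (hint : (interior K).Nonempty) :
    ∃ cK > (0 : ℝ), ∃ rK > (0 : ℝ), ∀ y ∈ frontier K, ∀ r : ℝ, 0 < r → r < rK →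
      ENNReal.ofReal (cK * r ^ ((n : ℝ) - 1)) ≤
        μH[(n : ℝ) - 1] (Metric.sphere y r ∩ K) := by
  classical
  set m : ℕ := n - 1 with hm
  haveI hfact : Fact (Module.finrank ℝ (EuclideanSpace ℝ (Fin n)) = m + 1) :=
    ⟨by rw [finrank_euclideanSpace_fin]; omega⟩
  obtain ⟨c, hc, hcball⟩ := aux_hausdorff_ball m
  -- interior ball
  obtain ⟨x0, hx0⟩ := hint
  obtain ⟨δ', hδ', hballδ'⟩ := Metric.isOpen_iff.1 isOpen_interior x0 hx0
  set δ : ℝ := δ' / 2 with hδdef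
  have hδ : 0 < δ := by positivity
  have hball : Metric.closedBall x0 δ ⊆ interior K :=
    (Metric.closedBall_subset_ball (by linarith)).trans hballδ'
  have hballK : Metric.closedBall x0 δ ⊆ K := hball.trans interior_subset
  -- outer bound
  obtain ⟨M0, hM0⟩ := hK.isBounded.subset_closedBall x0
  set M : ℝ := max M0 δ with hMdef
  have hM : 0 < M := lt_of_lt_of_le hδ (le_max_right _ _)
  have hMK : K ⊆ Metric.closedBall x0 M :=
    hM0.trans (Metric.closedBall_subset_closedBall (le_max_left _ _))
  set ε : ℝ := δ / M with hεdef
  have hε : 0 < ε := by positivity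
  set ρ : ℝ := min ε 1 / 2 with hρdef
  have hρ : 0 < ρ := by
    have : 0 < min ε 1 := lt_min hε one_pos
    positivity
  have hρε : ρ ≤ ε / 2 := by
    have := min_le_left ε 1
    rw [hρdef]; linarith
  have hρhalf : ρ ≤ 1 / 2 := by
    have := min_le_right ε 1
    rw [hρdef]; linarith
  refine ⟨c * ρ ^ m, by positivity, δ, hδ, ?_⟩
  intro y hy r hr hrδ
  have hyK : y ∈ K := hK.isClosed.frontier_subset hy
  have hyni : y ∉ interior K := fun h => hy.2 h
  -- distance bounds
  have hdist : δ ≤ dist x0 y := by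
    by_contra h
    push_neg at h
    exact hyni (hball (by simpa [Metric.mem_closedBall, dist_comm] using h.le))
  have hdistM : dist x0 y ≤ M := by
    have := hMK hyK
    simpa [Metric.mem_closedBall, dist_comm] using this
  set u0 : EuclideanSpace ℝ (Fin n) := x0 - y with hu0def
  have hu0norm : ‖u0‖ = dist x0 y := (dist_eq_norm x0 y).symm
  have hu0pos : 0 < ‖u0‖ := by rw [hu0norm]; linarith
  have hu0ne : u0 ≠ 0 := by
    intro h; rw [h, norm_zero] at hu0pos; exact lt_irrefl _ hu0pos
  set v : EuclideanSpace ℝ (Fin n) := ‖u0‖⁻¹ • u0 with hvdef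
  have hv : ‖v‖ = 1 := norm_smul_inv_norm hu0ne
  have hvne : v ≠ 0 := by
    intro h; rw [h, norm_zero] at hv; norm_num at hv
  have hu0v : ‖u0‖ • v = u0 := by
    rw [hvdef, smul_smul, mul_inv_cancel₀ hu0pos.ne', one_smul]
  -- cap membership
  have hcap : ∀ u : EuclideanSpace ℝ (Fin n), ‖u‖ = 1 → ‖u - v‖ ≤ ε →
      y + r • u ∈ Metric.sphere y r ∩ K := by
    intro u hu huv
    constructor
    · simp [Metric.mem_sphere, dist_eq_norm, norm_smul, abs_of_pos hr, hu]
    · set w := y + ‖u0‖ • u with hwdef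
      have hwK : w ∈ K := by
        apply hballK
        rw [Metric.mem_closedBall, dist_eq_norm]
        have hwx0 : w - x0 = ‖u0‖ • (u - v) := by
          rw [hwdef, smul_sub, hu0v, hu0def]; abel
        rw [hwx0, norm_smul, Real.norm_eq_abs, abs_of_pos hu0pos]
        calc ‖u0‖ * ‖u - v‖ ≤ M * ε := by
              apply mul_le_mul (by rw [hu0norm]; exact hdistM) huv (norm_nonneg _) hM.le
          _ = δ := by rw [hεdef]; field_simp
      set t : ℝ := r / ‖u0‖ with htdef
      have ht0 : 0 < t := div_pos hr hu0pos
      have ht1 : t ≤ 1 := by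
        rw [htdef, div_le_one hu0pos]
        calc r ≤ δ := hrδ.le
          _ ≤ ‖u0‖ := by rw [hu0norm]; exact hdist
      have hkey : (1 - t) • y + t • w = y + r • u := by
        rw [hwdef, smul_add, ← add_assoc, ← add_smul, sub_add_cancel, one_smul,
          smul_smul, htdef, div_mul_cancel₀ _ hu0pos.ne']
      rw [← hkey]
      exact hconv hyK hwK (by linarith) ht0.le (by ring)
  -- the orthogonal complement of v and the isometric embedding of F
  set W : Submodule ℝ (EuclideanSpace ℝ (Fin n)) := (ℝ ∙ v)ᗮ with hWdef
  have hvW : v ∈ Wᗮ :=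
    Submodule.le_orthogonal_orthogonal (ℝ ∙ v) (Submodule.mem_span_singleton_self v)
  set b : OrthonormalBasis (Fin m) ℝ W :=
    OrthonormalBasis.fromOrthogonalSpanSingleton m hvne with hbdef
  set J : EuclideanSpace ℝ (Fin m) →ₗᵢ[ℝ] EuclideanSpace ℝ (Fin n) :=
    W.subtypeₗᵢ.comp b.repr.symm.toLinearIsometry with hJdef
  have hJW : ∀ ξ, J ξ ∈ W := fun ξ => (b.repr.symm ξ).2
  -- the 1-Lipschitz projection
  set f : EuclideanSpace ℝ (Fin n) → EuclideanSpace ℝ (Fin n) :=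
    fun z => (W.orthogonalProjectionOnto (z - y) : EuclideanSpace ℝ (Fin n)) with hfdef
  have hf : LipschitzWith 1 f := by
    apply LipschitzWith.of_dist_le_mul
    intro a b'
    simp only [NNReal.coe_one, one_mul, dist_eq_norm]
    have hab : f a - f b' = (W.orthogonalProjectionOnto (a - b') :
        EuclideanSpace ℝ (Fin n)) := by
      rw [hfdef]
      push_cast [← Submodule.coe_sub, ← map_sub]
      congr 1
      abel
    rw [hab]
    calc ‖(W.orthogonalProjectionOnto (a - b') : EuclideanSpace ℝ (Fin n))‖
        = ‖W.orthogonalProjectionOnto (a - b')‖ := rfl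
      _ ≤ ‖W.orthogonalProjectionOnto‖ * ‖a - b'‖ :=
          (W.orthogonalProjectionOnto).le_opNorm _
      _ ≤ 1 * ‖a - b'‖ := by
          apply mul_le_mul_of_nonneg_right (Submodule.orthogonalProjectionOnto_norm_le W) (norm_nonneg _)
      _ = ‖a - b'‖ := one_mul _
  -- the image inclusion
  have himg : J '' Metric.closedBall 0 (ρ * r) ⊆ f '' (Metric.sphere y r ∩ K) := by
    rintro _ ⟨ξ, hξ, rfl⟩
    have hξnorm : ‖ξ‖ ≤ ρ * r := by
      rwa [Metric.mem_closedBall, dist_zero_right] at hξ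
    set a : EuclideanSpace ℝ (Fin n) := r⁻¹ • J ξ with hadef
    have haW : a ∈ W := W.smul_mem _ (hJW ξ)
    have hanorm : ‖a‖ ≤ ρ := by
      rw [hadef, norm_smul, Real.norm_eq_abs, abs_of_pos (inv_pos.2 hr), J.norm_map]
      calc r⁻¹ * ‖ξ‖ ≤ r⁻¹ * (ρ * r) := by
            apply mul_le_mul_of_nonneg_left hξnorm (inv_pos.2 hr).le
        _ = ρ := by field_simp
    have hav : inner ℝ a v = (0 : ℝ) := by
      have := haW
      rw [hWdef, Submodule.mem_orthogonal] at this
      have h2 := this v (Submodule.mem_span_singleton_self v)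
      rwa [real_inner_comm] at h2
    set s : ℝ := Real.sqrt (1 - ‖a‖ ^ 2) with hsdef
    have harg : 0 ≤ 1 - ‖a‖ ^ 2 := by nlinarith [norm_nonneg a]
    have hs0 : 0 ≤ s := Real.sqrt_nonneg _
    have hs2 : s ^ 2 = 1 - ‖a‖ ^ 2 := Real.sq_sqrt harg
    have hs1 : s ≤ 1 := by nlinarith [norm_nonneg a]
    set u : EuclideanSpace ℝ (Fin n) := a + s • v with hudef
    have hsv : ∀ t : ℝ, ‖t • v‖ ^ 2 = t ^ 2 := fun t => by
      rw [norm_smul, Real.norm_eq_abs, hv, mul_one, sq_abs]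
    have hu2 : ‖u‖ ^ 2 = 1 := by
      rw [hudef, norm_add_sq_real, inner_smul_right, hav, hsv]
      nlinarith
    have hu : ‖u‖ = 1 := by nlinarith [norm_nonneg u]
    have huv : ‖u - v‖ ≤ ε := by
      have huv2 : ‖u - v‖ ^ 2 ≤ ε ^ 2 := by
        have heq : u - v = a + (s - 1) • v := by
          rw [hudef]; module
        rw [heq, norm_add_sq_real, inner_smul_right, hav, hsv]
        have h1s : 1 - s ≤ ‖a‖ ^ 2 := by nlinarith
        nlinarith [norm_nonneg a, sq_nonneg (1 - s)]
      rw [← Real.sqrt_sq (norm_nonneg (u - v)), ← Real.sqrt_sq hε.le]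
      exact Real.sqrt_le_sqrt huv2
    refine ⟨y + r • u, hcap u hu huv, ?_⟩
    have hru : r • u = J ξ + (r * s) • v := by
      rw [hudef, smul_add, hadef, smul_smul, smul_smul, mul_inv_cancel₀ hr.ne', one_smul]
    rw [hfdef]
    simp only [add_sub_cancel_left]
    rw [hru, map_add]
    have h1 : W.orthogonalProjectionOnto ((r * s) • v) = 0 := by
      rw [_root_.map_smul,
        Submodule.orthogonalProjectionOnto_apply_of_mem_orthogonal hvW, smul_zero]
    rw [h1, add_zero]
    exact Submodule.starProjection_eq_self_iff.mpr (hJW ξ)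
  -- putting it all together
  have hexp : (n : ℝ) - 1 = (m : ℕ) := by
    rw [hm, Nat.cast_sub hn, Nat.cast_one]
  rw [hexp, Real.rpow_natCast]
  calc ENNReal.ofReal (c * ρ ^ m * r ^ m)
      = ENNReal.ofReal (c * (ρ * r) ^ m) := by rw [mul_pow]; ring_nf
    _ ≤ μH[(m : ℝ)] (Metric.closedBall (0 : EuclideanSpace ℝ (Fin m)) (ρ * r)) :=
        hcball _ (by positivity)
    _ = μH[(m : ℝ)] (J '' Metric.closedBall 0 (ρ * r)) :=
        (J.isometry.hausdorffMeasure_image (Or.inl (by positivity)) _).symm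
    _ ≤ μH[(m : ℝ)] (f '' (Metric.sphere y r ∩ K)) := measure_mono himg
    _ ≤ μH[(m : ℝ)] (Metric.sphere y r ∩ K) := by
        have h := hf.hausdorffMeasure_image_le
          (show (0:ℝ) ≤ (m : ℝ) by positivity) (Metric.sphere y r ∩ K)
        simpa using h
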